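/- Let n ≥ 1 and consider the translation action of ℤⁿ on itself. Let 𝓡 be a family of rectangles in ℤⁿ such that distinct members have disjoint interiors of boundaries in the strong sense that for distinct K, K' ∈ 𝓡 with K' ⊄ K, dist(∂K, ∂K') > 2N where N is the largest side length of K. Then for every K = (a + [0,N₁] × ⋯ × [0,Nₙ]) ∈ 𝓡 and every index i, the triangular region Dᵢ(K) (for n = 2: D₁(K) = {a + (−1−j, t) : 0 ≤ j ≤ N₂, 0 ≤ t ≤ N₂ − j}) is disjoint from ⋃_{K'∈𝓡} ∂K'. -/
import Mathlib


/-- The rectangle in `ℤ²` with lower corner `a` and side lengths `N₁, N₂`. -/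
def rect2 (a : ℤ × ℤ) (N₁ N₂ : ℕ) : Set (ℤ × ℤ) :=
  {p | a.1 ≤ p.1 ∧ p.1 ≤ a.1 + N₁ ∧ a.2 ≤ p.2 ∧ p.2 ≤ a.2 + N₂}

/-- The boundary of `A ⊆ ℤ²`: points of `A` at ℓ¹-distance 1 from the complement. -/
def bdry2 (A : Set (ℤ × ℤ)) : Set (ℤ × ℤ) :=
  {x | x ∈ A ∧ ∃ y, y ∉ A ∧ |x.1 - y.1| + |x.2 - y.2| = 1}

/-- The left triangular region `D₁(K)` attached to `K = a + [0,N₁]×[0,N₂]`. -/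
def D1 (a : ℤ × ℤ) (N₂ : ℕ) : Set (ℤ × ℤ) :=
  {p | ∃ j t : ℤ, 0 ≤ j ∧ j ≤ N₂ ∧ 0 ≤ t ∧ t ≤ (N₂ : ℤ) - j ∧
    p = (a.1 - 1 - j, a.2 + t)}

/-- The bottom triangular region `D₂(K)` attached to `K = a + [0,N₁]×[0,N₂]`. -/
def D2 (a : ℤ × ℤ) (N₁ : ℕ) : Set (ℤ × ℤ) :=
  {p | ∃ j s : ℤ, 0 ≤ j ∧ j ≤ N₁ ∧ 0 ≤ s ∧ s ≤ (N₁ : ℤ) - j ∧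
    p = (a.1 + s, a.2 - 1 - j)}

/-- Let `𝓡` be a family of rectangles in `ℤ²` (side lengths ≥ 1) such that
for distinct pieces `K, K'` with `K' ⊄ K`, `dist(∂K, ∂K') > 2N` where `N` is the largest
side length of `K`. Then for every `K ∈ 𝓡` the triangular regions `D₁(K)` and `D₂(K)`
are disjoint from `⋃_{K'∈𝓡} ∂K'`. -/
theorem stmt18 (𝓡 : Set ((ℤ × ℤ) × ℕ × ℕ))
    (hside : ∀ r ∈ 𝓡, 1 ≤ r.2.1 ∧ 1 ≤ r.2.2)
    (hsep : ∀ r ∈ 𝓡, ∀ r' ∈ 𝓡,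
      rect2 r.1 r.2.1 r.2.2 ≠ rect2 r'.1 r'.2.1 r'.2.2 →
      ¬ (rect2 r'.1 r'.2.1 r'.2.2 ⊆ rect2 r.1 r.2.1 r.2.2) →
      ∀ u ∈ bdry2 (rect2 r.1 r.2.1 r.2.2), ∀ v ∈ bdry2 (rect2 r'.1 r'.2.1 r'.2.2),
        (2 * (max r.2.1 r.2.2) : ℤ) < |u.1 - v.1| + |u.2 - v.2|) :
    ∀ r ∈ 𝓡,
      D1 r.1 r.2.2 ∩ (⋃ r' ∈ 𝓡, bdry2 (rect2 r'.1 r'.2.1 r'.2.2)) = ∅ ∧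
      D2 r.1 r.2.1 ∩ (⋃ r' ∈ 𝓡, bdry2 (rect2 r'.1 r'.2.1 r'.2.2)) = ∅ := by
  rintro ⟨a, N₁, N₂⟩ hr
  have h1 : 1 ≤ N₁ := (hside _ hr).1
  have h2 : 1 ≤ N₂ := (hside _ hr).2
  constructor
  · rw [Set.eq_empty_iff_forall_notMem]
    rintro p ⟨hp, hU⟩
    simp only [Set.mem_iUnion] at hU
    obtain ⟨r', hr', hpb⟩ := hU
    obtain ⟨j, t, hj0, hjN, ht0, htN, hpe⟩ := hp
    have hjN' : j ≤ (N₂ : ℤ) := hjN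
    have htN' : t ≤ (N₂ : ℤ) - j := htN
    have hpout : p ∉ rect2 a N₁ N₂ := by
      intro h
      have := h.1
      rw [hpe] at this
      simp only [rect2] at this
      omega
    by_cases heq : rect2 r'.1 r'.2.1 r'.2.2 = rect2 a N₁ N₂
    · exact hpout (heq ▸ hpb.1)
    by_cases hsub : rect2 r'.1 r'.2.1 r'.2.2 ⊆ rect2 a N₁ N₂
    · exact hpout (hsub hpb.1)
    · have hu : ((a.1, a.2 + t) : ℤ × ℤ) ∈ bdry2 (rect2 a N₁ N₂) := by
        refine ⟨⟨le_refl _, by omega, by omega, by omega⟩, (a.1 - 1, a.2 + t), ?_, ?_⟩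
        · intro h
          have := h.1
          omega
        · simp
      have key := hsep ⟨a, N₁, N₂⟩ hr r' hr' (fun h => heq h.symm) hsub _ hu p hpb
      rw [hpe] at key
      have key' : (2 * (max N₁ N₂ : ℕ) : ℤ) <
          |a.1 - (a.1 - 1 - j)| + |(a.2 + t) - (a.2 + t)| := key
      have e1 : |a.1 - (a.1 - 1 - j)| = 1 + j := by
        rw [abs_of_nonneg (by omega)]; ring
      have e2 : |(a.2 + t) - (a.2 + t)| = 0 := by simp
      rw [e1, e2] at key'
      have hm : (N₂ : ℤ) ≤ ((max N₁ N₂ : ℕ) : ℤ) :=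
        Int.ofNat_le.mpr (Nat.le_max_right _ _)
      omega
  · rw [Set.eq_empty_iff_forall_notMem]
    rintro p ⟨hp, hU⟩
    simp only [Set.mem_iUnion] at hU
    obtain ⟨r', hr', hpb⟩ := hU
    obtain ⟨j, s, hj0, hjN, hs0, hsN, hpe⟩ := hp
    have hjN' : j ≤ (N₁ : ℤ) := hjN
    have hsN' : s ≤ (N₁ : ℤ) - j := hsN
    have hpout : p ∉ rect2 a N₁ N₂ := by
      intro h
      have := h.2.2.1
      rw [hpe] at this
      simp only [rect2] at this
      omega
    by_cases heq : rect2 r'.1 r'.2.1 r'.2.2 = rect2 a N₁ N₂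
    · exact hpout (heq ▸ hpb.1)
    by_cases hsub : rect2 r'.1 r'.2.1 r'.2.2 ⊆ rect2 a N₁ N₂
    · exact hpout (hsub hpb.1)
    · have hu : ((a.1 + s, a.2) : ℤ × ℤ) ∈ bdry2 (rect2 a N₁ N₂) := by
        refine ⟨⟨by omega, by omega, le_refl _, by omega⟩, (a.1 + s, a.2 - 1), ?_, ?_⟩
        · intro h
          have := h.2.2.1
          omega
        · simp
      have key := hsep ⟨a, N₁, N₂⟩ hr r' hr' (fun h => heq h.symm) hsub _ hu p hpb
      rw [hpe] at key
      have key' : (2 * (max N₁ N₂ : ℕ) : ℤ) <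
          |(a.1 + s) - (a.1 + s)| + |a.2 - (a.2 - 1 - j)| := key
      have e1 : |(a.1 + s) - (a.1 + s)| = 0 := by simp
      have e2 : |a.2 - (a.2 - 1 - j)| = 1 + j := by
        rw [abs_of_nonneg (by omega)]; ring
      rw [e1, e2] at key'
      have hm : (N₁ : ℤ) ≤ ((max N₁ N₂ : ℕ) : ℤ) :=
        Int.ofNat_le.mpr (Nat.le_max_left _ _)
      omega
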